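/- Let n ∈ ℕ and r ≥ 0 a real number. For f : MvPowerSeries (Fin n) ℂ write N(f) for the sum ∑' (α : (Fin n) →₀ ℕ), ‖MvPowerSeries.coeff ℂ α f‖ · r ^ (α.sum fun _ k => k). If the families defining N(f) and N(g) are both summable, then the family defining N(f * g) is summable and N(f * g) ≤ N(f) · N(g). -/

import Mathlib

open scoped BigOperators

/-- Banach-algebra property of `𝒜^{n,r}`.
For `f : MvPowerSeries (Fin n) ℂ` let
`N(f) = ∑' α, ‖coeff α f‖ · r^|α|`.  If the families defining `N(f)` and `N(g)` are
summable, then so is the family defining `N(f * g)`, and `N(f * g) ≤ N(f) · N(g)`. -/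
theorem mvPowerSeries_weighted_l1_mul_le (n : ℕ) (r : ℝ) (hr : 0 ≤ r)
    (f g : MvPowerSeries (Fin n) ℂ)
    (hf : Summable fun α : (Fin n) →₀ ℕ =>
      ‖MvPowerSeries.coeff α f‖ * r ^ (α.sum fun _ k => k))
    (hg : Summable fun α : (Fin n) →₀ ℕ =>
      ‖MvPowerSeries.coeff α g‖ * r ^ (α.sum fun _ k => k)) :
    (Summable fun α : (Fin n) →₀ ℕ =>
      ‖MvPowerSeries.coeff α (f * g)‖ * r ^ (α.sum fun _ k => k)) ∧
    (∑' α : (Fin n) →₀ ℕ, ‖MvPowerSeries.coeff α (f * g)‖ * r ^ (α.sum fun _ k => k)) ≤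
      (∑' α : (Fin n) →₀ ℕ, ‖MvPowerSeries.coeff α f‖ * r ^ (α.sum fun _ k => k)) *
        ∑' α : (Fin n) →₀ ℕ, ‖MvPowerSeries.coeff α g‖ * r ^ (α.sum fun _ k => k) := by
  classical
  set F : ((Fin n) →₀ ℕ) → ℝ := fun α => ‖MvPowerSeries.coeff α f‖ * r ^ (α.sum fun _ k => k)
    with hF
  set G : ((Fin n) →₀ ℕ) → ℝ := fun α => ‖MvPowerSeries.coeff α g‖ * r ^ (α.sum fun _ k => k)
    with hG
  have hFnn : ∀ α, 0 ≤ F α := fun α => mul_nonneg (norm_nonneg _) (pow_nonneg hr _)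
  have hGnn : ∀ α, 0 ≤ G α := fun α => mul_nonneg (norm_nonneg _) (pow_nonneg hr _)
  have hprod : Summable fun x : ((Fin n) →₀ ℕ) × ((Fin n) →₀ ℕ) => F x.1 * G x.2 :=
    hf.mul_of_nonneg hg hFnn hGnn
  have hS : Summable fun α : (Fin n) →₀ ℕ =>
      ∑ kl ∈ Finset.HasAntidiagonal.antidiagonal α, F kl.1 * G kl.2 :=
    summable_sum_mul_antidiagonal_of_summable_mul hprod
  -- key pointwise bound
  have key : ∀ α : (Fin n) →₀ ℕ,
      ‖MvPowerSeries.coeff α (f * g)‖ * r ^ (α.sum fun _ k => k) ≤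
        ∑ kl ∈ Finset.HasAntidiagonal.antidiagonal α, F kl.1 * G kl.2 := by
    intro α
    rw [MvPowerSeries.coeff_mul]
    calc ‖∑ kl ∈ Finset.HasAntidiagonal.antidiagonal α,
            MvPowerSeries.coeff kl.1 f * MvPowerSeries.coeff kl.2 g‖ *
            r ^ (α.sum fun _ k => k)
        ≤ (∑ kl ∈ Finset.HasAntidiagonal.antidiagonal α,
            ‖MvPowerSeries.coeff kl.1 f‖ * ‖MvPowerSeries.coeff kl.2 g‖) *
            r ^ (α.sum fun _ k => k) := by
          apply mul_le_mul_of_nonneg_right _ (pow_nonneg hr _)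
          refine (norm_sum_le _ _).trans ?_
          apply Finset.sum_le_sum
          intro kl _
          exact norm_mul_le _ _
      _ = ∑ kl ∈ Finset.HasAntidiagonal.antidiagonal α, F kl.1 * G kl.2 := by
          rw [Finset.sum_mul]
          apply Finset.sum_congr rfl
          intro kl hkl
          rw [Finset.HasAntidiagonal.mem_antidiagonal] at hkl
          have hsum : (α.sum fun _ k => k) =
              (kl.1.sum fun _ k => k) + (kl.2.sum fun _ k => k) := by
            rw [← hkl, Finsupp.sum_add_index (fun _ _ => rfl) (fun _ _ _ _ => rfl)]
          rw [hsum, pow_add, hF, hG]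
          ring
  have hsummable : Summable fun α : (Fin n) →₀ ℕ =>
      ‖MvPowerSeries.coeff α (f * g)‖ * r ^ (α.sum fun _ k => k) :=
    hS.of_nonneg_of_le (fun α => mul_nonneg (norm_nonneg _) (pow_nonneg hr _)) key
  refine ⟨hsummable, ?_⟩
  calc (∑' α : (Fin n) →₀ ℕ, ‖MvPowerSeries.coeff α (f * g)‖ * r ^ (α.sum fun _ k => k))
      ≤ ∑' α : (Fin n) →₀ ℕ, ∑ kl ∈ Finset.HasAntidiagonal.antidiagonal α, F kl.1 * G kl.2 :=
        Summable.tsum_le_tsum key hsummable hS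
    _ = (∑' α, F α) * ∑' α, G α :=
        (Summable.tsum_mul_tsum_eq_tsum_sum_antidiagonal hf hg hprod).symm
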